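/- Every formula φ of ML(⊻) is 2^{vrank(φ)}-coherent, where vrank(φ) is the number of occurrences of ⊻ in φ: for every Kripke model K and every team T of K, K,T ⊨ φ if and only if K,T' ⊨ φ for all subteams T' ⊆ T with |T'| ≤ 2^{vrank(φ)}. -/

import Mathlib

/-- A Kripke model over a (nonempty) type `W` of worlds: an accessibility
relation `R` and a valuation `V`. -/
structure Kripke (W : Type) where
  R : W → W → Prop
  V : ℕ → Set W

/-- The image team `R[T] = {w | ∃ v ∈ T, v R w}`. -/
def Kripke.img {W : Type} (K : Kripke W) (T : Set W) : Set W :=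
  {w | ∃ v ∈ T, K.R v w}

/-- `T[R]S`: every world of `T` has an `R`-successor in `S` and every world of
`S` has an `R`-predecessor in `T`. -/
def Kripke.step {W : Type} (K : Kripke W) (T S : Set W) : Prop :=
  (∀ w ∈ T, ∃ v ∈ S, K.R w v) ∧ (∀ v ∈ S, ∃ w ∈ T, K.R w v)

/-- Formulas of `ML(⊻)`: modal logic in negation normal form extended with
intuitionistic disjunction `⊻` (`idis`). -/
inductive MLIForm : Type
  | pos : ℕ → MLIForm
  | neg : ℕ → MLIForm
  | and : MLIForm → MLIForm → MLIForm
  | or  : MLIForm → MLIForm → MLIForm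
  | dia : MLIForm → MLIForm
  | box : MLIForm → MLIForm
  | idis : MLIForm → MLIForm → MLIForm

/-- Team semantics for `ML(⊻)`. -/
def MLISat {W : Type} (K : Kripke W) : Set W → MLIForm → Prop
  | T, .pos p => T ⊆ K.V p
  | T, .neg p => T ∩ K.V p = ∅
  | T, .and φ ψ => MLISat K T φ ∧ MLISat K T ψ
  | T, .or φ ψ => ∃ T₁ T₂, T₁ ∪ T₂ = T ∧ MLISat K T₁ φ ∧ MLISat K T₂ ψ
  | T, .dia φ => ∃ T', K.step T T' ∧ MLISat K T' φ
  | T, .box φ => MLISat K (K.img T) φ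
  | T, .idis φ ψ => MLISat K T φ ∨ MLISat K T ψ

/-- `vrank φ`: the number of occurrences of `⊻` in an `ML(⊻)`-formula. -/
def vrank : MLIForm → ℕ
  | .pos _ => 0
  | .neg _ => 0
  | .and φ ψ => vrank φ + vrank ψ
  | .or φ ψ => vrank φ + vrank ψ
  | .dia φ => vrank φ
  | .box φ => vrank φ
  | .idis φ ψ => vrank φ + vrank ψ + 1

/-- Downward closure. -/
lemma mli_dc {W : Type} (K : Kripke W) (φ : MLIForm) :
    ∀ T T' : Set W, T' ⊆ T → MLISat K T φ → MLISat K T' φ := by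
  induction φ with
  | pos p => exact fun T T' hsub h x hx => h (hsub hx)
  | neg p =>
    intro T T' hsub h
    simp only [MLISat] at h ⊢
    exact Set.eq_empty_of_subset_empty (h ▸ Set.inter_subset_inter_left _ hsub)
  | and φ ψ ihφ ihψ =>
    intro T T' hsub h
    exact ⟨ihφ T T' hsub h.1, ihψ T T' hsub h.2⟩
  | or φ ψ ihφ ihψ =>
    intro T T' hsub h
    obtain ⟨T₁, T₂, hu, h1, h2⟩ := h
    refine ⟨T' ∩ T₁, T' ∩ T₂, ?_, ihφ _ _ Set.inter_subset_right h1,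
      ihψ _ _ Set.inter_subset_right h2⟩
    rw [← Set.inter_union_distrib_left, hu]
    exact Set.inter_eq_self_of_subset_left hsub
  | dia φ ih =>
    intro T T' hsub h
    obtain ⟨S, ⟨hf, hb⟩, hs⟩ := h
    refine ⟨{v ∈ S | ∃ w ∈ T', K.R w v}, ⟨?_, ?_⟩, ih _ _ (Set.sep_subset _ _) hs⟩
    · intro w hw
      obtain ⟨v, hv, hr⟩ := hf w (hsub hw)
      exact ⟨v, ⟨hv, w, hw, hr⟩, hr⟩
    · rintro v ⟨_, w, hw, hr⟩
      exact ⟨w, hw, hr⟩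
  | box φ ih =>
    intro T T' hsub h
    refine ih _ _ ?_ h
    rintro v ⟨w, hw, hr⟩
    exact ⟨w, hsub hw, hr⟩
  | idis φ ψ ihφ ihψ =>
    intro T T' hsub h
    exact h.imp (ihφ T T' hsub) (ihψ T T' hsub)

/-- Flatness of `vrank`-0 formulas. -/
lemma mli_flat {W : Type} (K : Kripke W) (φ : MLIForm) (h0 : vrank φ = 0) :
    ∀ T : Set W, (∀ w ∈ T, MLISat K {w} φ) → MLISat K T φ := by
  induction φ with
  | pos p =>
    intro T h w hw
    exact h w hw rfl
  | neg p =>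
    intro T h
    show T ∩ K.V p = ∅
    ext w
    simp only [Set.mem_inter_iff, Set.mem_empty_iff_false, iff_false, not_and]
    intro hw hv
    have hte : ({w} : Set W) ∩ K.V p = ∅ := h w hw
    have hm : w ∈ ({w} : Set W) ∩ K.V p := ⟨rfl, hv⟩
    rw [hte] at hm
    exact hm
  | and φ ψ ihφ ihψ =>
    simp only [vrank, Nat.add_eq_zero] at h0
    intro T h
    exact ⟨ihφ h0.1 T (fun w hw => (h w hw).1), ihψ h0.2 T (fun w hw => (h w hw).2)⟩
  | or φ ψ ihφ ihψ =>
    simp only [vrank, Nat.add_eq_zero] at h0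
    intro T h
    have key : ∀ w ∈ T, MLISat K {w} φ ∨ MLISat K {w} ψ := by
      intro w hw
      obtain ⟨T₁, T₂, hu, h1, h2⟩ := h w hw
      have hmu : w ∈ T₁ ∪ T₂ := by rw [hu]; exact rfl
      rcases hmu with hm | hm
      · left
        exact mli_dc K φ T₁ {w} (Set.singleton_subset_iff.mpr hm) h1
      · right
        exact mli_dc K ψ T₂ {w} (Set.singleton_subset_iff.mpr hm) h2
    refine ⟨{w ∈ T | MLISat K {w} φ}, {w ∈ T | MLISat K {w} ψ}, ?_, ?_, ?_⟩
    · apply Set.Subset.antisymm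
      · exact Set.union_subset (Set.sep_subset _ _) (Set.sep_subset _ _)
      · intro w hw
        rcases key w hw with h' | h'
        · exact Or.inl ⟨hw, h'⟩
        · exact Or.inr ⟨hw, h'⟩
    · exact ihφ h0.1 _ (fun w hw => hw.2)
    · exact ihψ h0.2 _ (fun w hw => hw.2)
  | dia φ ih =>
    simp only [vrank] at h0
    intro T h
    choose f hf using fun w (hw : w ∈ T) => h w hw
    refine ⟨⋃ (w : W) (hw : w ∈ T), f w hw, ⟨?_, ?_⟩, ?_⟩
    · intro w hw
      obtain ⟨v, hv, hr⟩ := (hf w hw).1.1 w rfl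
      exact ⟨v, Set.mem_iUnion.mpr ⟨w, Set.mem_iUnion.mpr ⟨hw, hv⟩⟩, hr⟩
    · intro v hv
      obtain ⟨w, hw⟩ := Set.mem_iUnion.mp hv
      obtain ⟨hwT, hvf⟩ := Set.mem_iUnion.mp hw
      obtain ⟨u, hu, hr⟩ := (hf w hwT).1.2 v hvf
      exact ⟨w, hwT, hu ▸ hr⟩
    · apply ih h0
      intro v hv
      obtain ⟨w, hw⟩ := Set.mem_iUnion.mp hv
      obtain ⟨hwT, hvf⟩ := Set.mem_iUnion.mp hw
      exact mli_dc K φ _ {v} (Set.singleton_subset_iff.mpr hvf) (hf w hwT).2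
  | box φ ih =>
    simp only [vrank] at h0
    intro T h
    show MLISat K (K.img T) φ
    apply ih h0
    rintro v ⟨w, hw, hr⟩
    have := h w hw
    have hsub : {v} ⊆ K.img {(w : W)} := Set.singleton_subset_iff.mpr ⟨w, rfl, hr⟩
    exact mli_dc K φ _ {v} hsub this
  | idis φ ψ _ _ =>
    simp [vrank] at h0

/-- Disjunctive normal form: a list of `vrank`-0 formulas. -/
def mnf : MLIForm → List MLIForm
  | .pos p => [.pos p]
  | .neg p => [.neg p]
  | .and φ ψ => ((mnf φ) ×ˢ (mnf ψ)).map fun p => .and p.1 p.2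
  | .or φ ψ => ((mnf φ) ×ˢ (mnf ψ)).map fun p => .or p.1 p.2
  | .dia φ => (mnf φ).map .dia
  | .box φ => (mnf φ).map .box
  | .idis φ ψ => mnf φ ++ mnf ψ

lemma mnf_vrank (φ : MLIForm) : ∀ θ ∈ mnf φ, vrank θ = 0 := by
  induction φ with
  | pos p => simp [mnf, vrank]
  | neg p => simp [mnf, vrank]
  | and φ ψ ihφ ihψ =>
    simp only [mnf, List.mem_map, List.mem_product, Prod.exists]
    rintro θ ⟨a, b, ⟨ha, hb⟩, rfl⟩
    simp [vrank, ihφ a ha, ihψ b hb]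
  | or φ ψ ihφ ihψ =>
    simp only [mnf, List.mem_map, List.mem_product, Prod.exists]
    rintro θ ⟨a, b, ⟨ha, hb⟩, rfl⟩
    simp [vrank, ihφ a ha, ihψ b hb]
  | dia φ ih =>
    simp only [mnf, List.mem_map]
    rintro θ ⟨a, ha, rfl⟩
    simp [vrank, ih a ha]
  | box φ ih =>
    simp only [mnf, List.mem_map]
    rintro θ ⟨a, ha, rfl⟩
    simp [vrank, ih a ha]
  | idis φ ψ ihφ ihψ =>
    simp only [mnf, List.mem_append]
    rintro θ (h | h)
    · exact ihφ θ h
    · exact ihψ θ h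

lemma mnf_length (φ : MLIForm) : (mnf φ).length ≤ 2 ^ vrank φ := by
  induction φ with
  | pos p => simp [mnf, vrank]
  | neg p => simp [mnf, vrank]
  | and φ ψ ihφ ihψ =>
    simp only [mnf, List.length_map, List.length_product, vrank, pow_add]
    exact Nat.mul_le_mul ihφ ihψ
  | or φ ψ ihφ ihψ =>
    simp only [mnf, List.length_map, List.length_product, vrank, pow_add]
    exact Nat.mul_le_mul ihφ ihψ
  | dia φ ih => simpa [mnf, vrank] using ih
  | box φ ih => simpa [mnf, vrank] using ih
  | idis φ ψ ihφ ihψ =>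
    simp only [mnf, List.length_append, vrank, pow_add, pow_succ]
    calc (mnf φ).length + (mnf ψ).length ≤ 2 ^ vrank φ + 2 ^ vrank ψ :=
          Nat.add_le_add ihφ ihψ
      _ ≤ 2 ^ vrank φ * 2 ^ vrank ψ + 2 ^ vrank φ * 2 ^ vrank ψ := by
          have h1 : 2 ^ vrank φ ≤ 2 ^ vrank φ * 2 ^ vrank ψ :=
            Nat.le_mul_of_pos_right _ (by positivity)
          have h2 : 2 ^ vrank ψ ≤ 2 ^ vrank φ * 2 ^ vrank ψ :=
            Nat.le_mul_of_pos_left _ (by positivity)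
          omega
      _ = 2 ^ vrank φ * 2 ^ vrank ψ * 2 := by ring

lemma mnf_sat {W : Type} (K : Kripke W) (φ : MLIForm) :
    ∀ T : Set W, MLISat K T φ ↔ ∃ θ ∈ mnf φ, MLISat K T θ := by
  induction φ with
  | pos p => intro T; simp [mnf]
  | neg p => intro T; simp [mnf]
  | and φ ψ ihφ ihψ =>
    intro T
    constructor
    · rintro ⟨h1, h2⟩
      obtain ⟨θ, hθ, hsθ⟩ := (ihφ T).mp h1
      obtain ⟨η, hη, hsη⟩ := (ihψ T).mp h2
      exact ⟨.and θ η, List.mem_map.mpr ⟨(θ, η), List.mem_product.mpr ⟨hθ, hη⟩, rfl⟩,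
        hsθ, hsη⟩
    · rintro ⟨θ', hθ', hs⟩
      obtain ⟨⟨θ, η⟩, hmem, rfl⟩ := List.mem_map.mp hθ'
      obtain ⟨hθ, hη⟩ := List.mem_product.mp hmem
      exact ⟨(ihφ T).mpr ⟨θ, hθ, hs.1⟩, (ihψ T).mpr ⟨η, hη, hs.2⟩⟩
  | or φ ψ ihφ ihψ =>
    intro T
    constructor
    · rintro ⟨T₁, T₂, hu, h1, h2⟩
      obtain ⟨θ, hθ, hsθ⟩ := (ihφ T₁).mp h1
      obtain ⟨η, hη, hsη⟩ := (ihψ T₂).mp h2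
      exact ⟨.or θ η, List.mem_map.mpr ⟨(θ, η), List.mem_product.mpr ⟨hθ, hη⟩, rfl⟩,
        T₁, T₂, hu, hsθ, hsη⟩
    · rintro ⟨θ', hθ', hs⟩
      obtain ⟨⟨θ, η⟩, hmem, rfl⟩ := List.mem_map.mp hθ'
      obtain ⟨hθ, hη⟩ := List.mem_product.mp hmem
      obtain ⟨T₁, T₂, hu, h1, h2⟩ := hs
      exact ⟨T₁, T₂, hu, (ihφ T₁).mpr ⟨θ, hθ, h1⟩, (ihψ T₂).mpr ⟨η, hη, h2⟩⟩
  | dia φ ih =>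
    intro T
    constructor
    · rintro ⟨S, hst, hs⟩
      obtain ⟨θ, hθ, hsθ⟩ := (ih S).mp hs
      exact ⟨.dia θ, List.mem_map.mpr ⟨θ, hθ, rfl⟩, S, hst, hsθ⟩
    · rintro ⟨θ', hθ', hs⟩
      obtain ⟨θ, hθ, rfl⟩ := List.mem_map.mp hθ'
      obtain ⟨S, hst, hsθ⟩ := hs
      exact ⟨S, hst, (ih S).mpr ⟨θ, hθ, hsθ⟩⟩
  | box φ ih =>
    intro T
    constructor
    · intro h
      obtain ⟨θ, hθ, hsθ⟩ := (ih (K.img T)).mp h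
      exact ⟨.box θ, List.mem_map.mpr ⟨θ, hθ, rfl⟩, hsθ⟩
    · rintro ⟨θ', hθ', hs⟩
      obtain ⟨θ, hθ, rfl⟩ := List.mem_map.mp hθ'
      exact (ih (K.img T)).mpr ⟨θ, hθ, hs⟩
  | idis φ ψ ihφ ihψ =>
    intro T
    constructor
    · rintro (h | h)
      · obtain ⟨θ, hθ, hs⟩ := (ihφ T).mp h
        exact ⟨θ, List.mem_append_left _ hθ, hs⟩
      · obtain ⟨θ, hθ, hs⟩ := (ihψ T).mp h
        exact ⟨θ, List.mem_append_right _ hθ, hs⟩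
    · rintro ⟨θ, hθ, hs⟩
      rcases List.mem_append.mp hθ with h | h
      · exact Or.inl ((ihφ T).mpr ⟨θ, h, hs⟩)
      · exact Or.inr ((ihψ T).mpr ⟨θ, h, hs⟩)

lemma encard_mem_list_le {α : Type} (l : List α) :
    Set.encard {x | x ∈ l} ≤ (l.length : ℕ∞) := by
  induction l with
  | nil => simp
  | cons a l ih =>
    have : {x | x ∈ a :: l} = insert a {x | x ∈ l} := by
      ext x; simp
    rw [this]
    calc (insert a {x | x ∈ l}).encard ≤ {x | x ∈ l}.encard + 1 := Set.encard_insert_le _ _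
      _ ≤ (l.length : ℕ∞) + 1 := by exact add_le_add ih le_rfl
      _ = ((a :: l).length : ℕ∞) := by norm_cast

/-- Every `ML(⊻)`-formula `φ` is `2^{vrank φ}`-coherent:
`K,T ⊨ φ` iff `K,T' ⊨ φ` for every subteam `T' ⊆ T` of size at most
`2^{vrank φ}`. -/
theorem mli_coherence {W : Type} [Nonempty W] (K : Kripke W) (T : Set W)
    (φ : MLIForm) :
    MLISat K T φ ↔
      ∀ T' ⊆ T, T'.encard ≤ (2 ^ vrank φ : ℕ) → MLISat K T' φ := by
  constructor
  · intro h T' hsub _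
    exact mli_dc K φ T T' hsub h
  · intro H
    by_contra hT
    have hθ : ∀ θ ∈ mnf φ, ∃ w ∈ T, ¬ MLISat K {w} θ := by
      intro θ hθmem
      by_contra hc
      push_neg at hc
      exact hT ((mnf_sat K φ T).mpr ⟨θ, hθmem, mli_flat K θ (mnf_vrank φ θ hθmem) T hc⟩)
    classical
    choose f hfT hfn using fun θ (h : θ ∈ mnf φ) => hθ θ h
    set g : MLIForm → W := fun θ => if h : θ ∈ mnf φ then f θ h else Classical.arbitrary W
    set T' : Set W := g '' {θ | θ ∈ mnf φ} with hT'
    have hsub : T' ⊆ T := by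
      rintro w ⟨θ, hθmem, rfl⟩
      have hg : g θ = f θ hθmem := dif_pos hθmem
      rw [hg]
      exact hfT θ hθmem
    have hcard : T'.encard ≤ (2 ^ vrank φ : ℕ) := by
      calc T'.encard ≤ Set.encard {θ | θ ∈ mnf φ} := Set.encard_image_le _ _
        _ ≤ ((mnf φ).length : ℕ∞) := encard_mem_list_le _
        _ ≤ ((2 ^ vrank φ : ℕ) : ℕ∞) := by exact_mod_cast mnf_length φ
    obtain ⟨θ, hθmem, hsθ⟩ := (mnf_sat K φ T').mp (H T' hsub hcard)
    have hmem : g θ ∈ T' := ⟨θ, hθmem, rfl⟩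
    have : MLISat K {g θ} θ :=
      mli_dc K θ T' {g θ} (Set.singleton_subset_iff.mpr hmem) hsθ
    have hg : g θ = f θ hθmem := dif_pos hθmem
    exact hfn θ hθmem (hg ▸ this)
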